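/- Kepler's third law for the Kepler-Heisenberg system: if c : ℝ → ℝ⁶ is a T-periodic solution with size a = sup over one period of Q(c(t))^(1/4), then for every λ > 0 the dilated curve c_λ(t) = D_λ(c(t/λ²)) is a (λ²T)-periodic solution with size λ·a; consequently the ratio (period)²/(size)⁴ is the same for c_λ as for c. -/

import Mathlib

/-- `P_X = p_x - (1/2) y p_z`, where phase space coordinates are
`(x, y, z, p_x, p_y, p_z) = (p 0, p 1, p 2, p 3, p 4, p 5)`. -/
noncomputable def PX (p : Fin 6 → ℝ) : ℝ := p 3 - (1/2) * p 1 * p 5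

/-- `P_Y = p_y + (1/2) x p_z`. -/
noncomputable def PY (p : Fin 6 → ℝ) : ℝ := p 4 + (1/2) * p 0 * p 5

/-- `Q = (x² + y²)² + 16 z²`. -/
noncomputable def Qf (p : Fin 6 → ℝ) : ℝ := ((p 0)^2 + (p 1)^2)^2 + 16 * (p 2)^2

/-- The Kepler–Heisenberg Hamiltonian `H = (1/2)(P_X² + P_Y²) - (1/(8π)) Q^{-1/2}`. -/
noncomputable def Ham (p : Fin 6 → ℝ) : ℝ :=
  (1/2) * ((PX p)^2 + (PY p)^2) - (1/(8*Real.pi)) * (Qf p) ^ (-(1/2) : ℝ)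

/-- A solution of the Kepler–Heisenberg system: a differentiable curve on an open
interval (open preconnected set) `I`, whose position component never vanishes, and
which satisfies Hamilton's equations for `Ham`. -/
def IsSolutionOn (c : ℝ → Fin 6 → ℝ) (I : Set ℝ) : Prop :=
  IsOpen I ∧ IsPreconnected I ∧
  ∀ t ∈ I,
    (¬ (c t 0 = 0 ∧ c t 1 = 0 ∧ c t 2 = 0)) ∧
    HasDerivAt (fun τ => c τ 0) (fderiv ℝ Ham (c t) (Pi.single 3 1)) t ∧
    HasDerivAt (fun τ => c τ 1) (fderiv ℝ Ham (c t) (Pi.single 4 1)) t ∧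
    HasDerivAt (fun τ => c τ 2) (fderiv ℝ Ham (c t) (Pi.single 5 1)) t ∧
    HasDerivAt (fun τ => c τ 3) (-(fderiv ℝ Ham (c t) (Pi.single 0 1))) t ∧
    HasDerivAt (fun τ => c τ 4) (-(fderiv ℝ Ham (c t) (Pi.single 1 1))) t ∧
    HasDerivAt (fun τ => c τ 5) (-(fderiv ℝ Ham (c t) (Pi.single 2 1))) t
/-- The Heisenberg dilation `D_λ` on phase space. -/
noncomputable def Dil (l : ℝ) (p : Fin 6 → ℝ) : Fin 6 → ℝ :=
  ![l * p 0, l * p 1, l^2 * p 2, l⁻¹ * p 3, l⁻¹ * p 4, (l^2)⁻¹ * p 5]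

/-- The rotation `R_φ` about the `z`-axis on phase space. -/
noncomputable def Rot (φ : ℝ) (p : Fin 6 → ℝ) : Fin 6 → ℝ :=
  ![p 0 * Real.cos φ - p 1 * Real.sin φ, p 0 * Real.sin φ + p 1 * Real.cos φ, p 2,
    p 3 * Real.cos φ - p 4 * Real.sin φ, p 3 * Real.sin φ + p 4 * Real.cos φ, p 5]


noncomputable def sVec (l : ℝ) : Fin 6 → ℝ := ![l, l, l^2, l⁻¹, l⁻¹, (l^2)⁻¹]

lemma dil_apply (l : ℝ) (p : Fin 6 → ℝ) (i : Fin 6) : Dil l p i = sVec l i * p i := by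
  fin_cases i <;> rfl

lemma Qf_dil (l : ℝ) (p : Fin 6 → ℝ) : Qf (Dil l p) = l^4 * Qf p := by
  simp [Qf, Dil]; ring

lemma Qf_nonneg (p : Fin 6 → ℝ) : 0 ≤ Qf p := by unfold Qf; positivity

lemma Qf_pos {p : Fin 6 → ℝ} (h : ¬(p 0 = 0 ∧ p 1 = 0 ∧ p 2 = 0)) : 0 < Qf p := by
  rcases (Qf_nonneg p).lt_or_eq with h1 | h1
  · exact h1
  · exfalso
    apply h
    have h2 : ((p 0)^2 + (p 1)^2)^2 + 16 * (p 2)^2 = 0 := h1.symm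
    have e0 : (p 0)^2 + (p 1)^2 = 0 := by
      nlinarith [sq_nonneg ((p 0)^2 + (p 1)^2), sq_nonneg (p 2), sq_nonneg (p 0), sq_nonneg (p 1)]
    have ez : p 2 = 0 := by
      nlinarith [sq_nonneg ((p 0)^2 + (p 1)^2), sq_nonneg (p 2)]
    have e1 : p 0 = 0 := by nlinarith [sq_nonneg (p 0), sq_nonneg (p 1)]
    have e2 : p 1 = 0 := by nlinarith [sq_nonneg (p 0), sq_nonneg (p 1)]
    exact ⟨e1, e2, ez⟩

lemma rpow_l4 {l : ℝ} (hl : 0 < l) : ((l^4 : ℝ)) ^ (-(1/2) : ℝ) = (l^2)⁻¹ := by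
  rw [show (l^4 : ℝ) = (l^2)^2 by ring, ← Real.rpow_natCast (l^2) 2,
    ← Real.rpow_mul (by positivity)]
  norm_num
  rw [Real.rpow_neg_one]

lemma Ham_dil {l : ℝ} (hl : 0 < l) (p : Fin 6 → ℝ) : Ham (Dil l p) = (l^2)⁻¹ * Ham p := by
  have hPX : PX (Dil l p) = l⁻¹ * PX p := by
    show l⁻¹ * p 3 - (1/2) * (l * p 1) * ((l^2)⁻¹ * p 5) = l⁻¹ * (p 3 - (1/2) * p 1 * p 5)
    field_simp
  have hPY : PY (Dil l p) = l⁻¹ * PY p := by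
    show l⁻¹ * p 4 + (1/2) * (l * p 0) * ((l^2)⁻¹ * p 5) = l⁻¹ * (p 4 + (1/2) * p 0 * p 5)
    field_simp
  have hQ : (Qf (Dil l p)) ^ (-(1/2) : ℝ) = (l^2)⁻¹ * (Qf p) ^ (-(1/2) : ℝ) := by
    rw [Qf_dil, Real.mul_rpow (by positivity) (Qf_nonneg p), rpow_l4 hl]
  unfold Ham
  rw [hPX, hPY, hQ]
  field_simp

noncomputable def DilL (l : ℝ) : (Fin 6 → ℝ) →L[ℝ] (Fin 6 → ℝ) :=
  ContinuousLinearMap.pi fun i => sVec l i • ContinuousLinearMap.proj i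

lemma dil_eq_dilL (l : ℝ) (p : Fin 6 → ℝ) : Dil l p = DilL l p := by
  funext i
  rw [dil_apply]
  simp [DilL]

lemma sVec_ne {l : ℝ} (hl : 0 < l) (i : Fin 6) : sVec l i ≠ 0 := by
  have h2 : (l^2 : ℝ) ≠ 0 := by positivity
  fin_cases i
  · exact hl.ne'
  · exact hl.ne'
  · exact h2
  · exact inv_ne_zero hl.ne'
  · exact inv_ne_zero hl.ne'
  · exact inv_ne_zero h2

lemma dilL_single (l : ℝ) (i : Fin 6) (a : ℝ) :
    DilL l (Pi.single i a) = Pi.single i (sVec l i * a) := by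
  funext j
  simp [DilL, Pi.single_apply]
  split_ifs with h
  · subst h; ring
  · ring

lemma ham_diff {p : Fin 6 → ℝ} (h : Qf p ≠ 0) : DifferentiableAt ℝ Ham p := by
  have hQ : DifferentiableAt ℝ Qf p := by unfold Qf; fun_prop
  have h1 : DifferentiableAt ℝ (fun q => (Qf q) ^ (-(1/2) : ℝ)) p :=
    hQ.rpow_const (Or.inl h)
  have h2 : DifferentiableAt ℝ (fun q => (1/2) * ((PX q)^2 + (PY q)^2)) p := by
    unfold PX PY; fun_prop
  exact h2.sub ((differentiableAt_const _).mul h1)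

lemma fderiv_dil {l : ℝ} (hl : 0 < l) {p : Fin 6 → ℝ} (hp : Qf p ≠ 0) (i : Fin 6) :
    fderiv ℝ Ham (Dil l p) (Pi.single i 1)
      = (l^2)⁻¹ * (sVec l i)⁻¹ * fderiv ℝ Ham p (Pi.single i 1) := by
  have hQp : 0 < Qf p := lt_of_le_of_ne (Qf_nonneg p) (Ne.symm hp)
  have hQd : Qf (Dil l p) ≠ 0 := by rw [Qf_dil]; positivity
  have hHd : DifferentiableAt ℝ Ham (Dil l p) := ham_diff hQd
  have hHp : DifferentiableAt ℝ Ham p := ham_diff hp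
  have hHd' : DifferentiableAt ℝ Ham (DilL l p) := by rwa [← dil_eq_dilL]
  have hcomp : fderiv ℝ (Ham ∘ (DilL l)) p
      = (fderiv ℝ Ham (DilL l p)).comp (DilL l) := by
    rw [fderiv_comp p hHd' (DilL l).differentiableAt, (DilL l).fderiv]
  have heq : (Ham ∘ (DilL l)) = fun q => (l^2)⁻¹ * Ham q := by
    funext q
    simp only [Function.comp_apply, ← dil_eq_dilL, Ham_dil hl]
  have hsm : fderiv ℝ (Ham ∘ (DilL l)) p = (l^2)⁻¹ • fderiv ℝ Ham p := by
    rw [heq, fderiv_const_mul hHp]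
  have key := hcomp.symm.trans hsm
  have happ := congrFun (congrArg (fun (f : (Fin 6 → ℝ) →L[ℝ] ℝ) => (f : (Fin 6 → ℝ) → ℝ)) key)
    (Pi.single i ((sVec l i)⁻¹))
  simp only [ContinuousLinearMap.comp_apply, ContinuousLinearMap.coe_smul', Pi.smul_apply,
    smul_eq_mul] at happ
  rw [dilL_single, mul_inv_cancel₀ (sVec_ne hl i)] at happ
  have hsingle : (Pi.single i ((sVec l i)⁻¹) : Fin 6 → ℝ)
      = (sVec l i)⁻¹ • (Pi.single i (1 : ℝ) : Fin 6 → ℝ) := by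
    funext j
    simp [Pi.single_apply, mul_ite]
  rw [hsingle, map_smul, smul_eq_mul] at happ
  rw [dil_eq_dilL, happ]
  ring

open Pointwise in
/-- Kepler's third law for the Kepler–Heisenberg system: if `c` is a `T`-periodic solution
with size `a = sup {Q(c(t))^(1/4) : t ∈ [0, T]}`, then for every `λ > 0` the dilated curve
`c_λ(t) = D_λ(c(t/λ²))` is a `λ²T`-periodic solution with size `λ a`; consequently the
ratio `(period)²/(size)⁴` is the same for `c_λ` as for `c`. -/
theorem kh_third_law (c : ℝ → Fin 6 → ℝ) (T a : ℝ) (hT : 0 < T)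
    (hc : IsSolutionOn c Set.univ) (hper : ∀ t, c (t + T) = c t)
    (ha : a = sSup ((fun t => (Qf (c t)) ^ ((1:ℝ)/4)) '' Set.Icc 0 T))
    (l : ℝ) (hl : 0 < l) :
    IsSolutionOn (fun t => Dil l (c (t / l^2))) Set.univ ∧
    (∀ t, Dil l (c ((t + l^2 * T) / l^2)) = Dil l (c (t / l^2))) ∧
    sSup ((fun t => (Qf (Dil l (c (t / l^2)))) ^ ((1:ℝ)/4)) '' Set.Icc 0 (l^2 * T))
      = l * a ∧
    (l^2 * T)^2 / (l * a)^4 = T^2 / a^4 := by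
  obtain ⟨-, -, hsol⟩ := hc
  have hl2 : (l^2 : ℝ) ≠ 0 := by positivity
  have hQpos : ∀ s : ℝ, Qf (c s) ≠ 0 := fun s => (Qf_pos (hsol s trivial).1).ne'
  have hdiv : ∀ t : ℝ, HasDerivAt (fun τ : ℝ => τ / l^2) (1 / l^2) t :=
    fun t => (hasDerivAt_id t).div_const (l^2)
  refine ⟨⟨isOpen_univ, isPreconnected_univ, fun t _ => ?_⟩, ?_, ?_, ?_⟩
  · obtain ⟨hp, h0, h1, h2, h3, h4, h5⟩ := hsol (t / l^2) trivial
    refine ⟨?_, ?_, ?_, ?_, ?_, ?_, ?_⟩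
    · intro h
      apply hp
      have e0 : l * c (t/l^2) 0 = 0 := h.1
      have e1 : l * c (t/l^2) 1 = 0 := h.2.1
      have e2 : l^2 * c (t/l^2) 2 = 0 := h.2.2
      exact ⟨(mul_eq_zero.mp e0).resolve_left hl.ne',
        (mul_eq_zero.mp e1).resolve_left hl.ne',
        (mul_eq_zero.mp e2).resolve_left hl2⟩
    · have hval : l * (fderiv ℝ Ham (c (t/l^2)) (Pi.single 3 1) * (1 / l^2))
          = fderiv ℝ Ham (Dil l (c (t / l^2))) (Pi.single 3 1) := by
        rw [fderiv_dil hl (hQpos _) 3]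
        have : sVec l (3 : Fin 6) = l⁻¹ := rfl
        rw [this]; field_simp
      have hd := (h0.comp t (hdiv t)).const_mul l
      rw [hval] at hd
      exact hd
    · have hval : l * (fderiv ℝ Ham (c (t/l^2)) (Pi.single 4 1) * (1 / l^2))
          = fderiv ℝ Ham (Dil l (c (t / l^2))) (Pi.single 4 1) := by
        rw [fderiv_dil hl (hQpos _) 4]
        have : sVec l (4 : Fin 6) = l⁻¹ := rfl
        rw [this]; field_simp
      have hd := (h1.comp t (hdiv t)).const_mul l
      rw [hval] at hd
      exact hd
    · have hval : l^2 * (fderiv ℝ Ham (c (t/l^2)) (Pi.single 5 1) * (1 / l^2))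
          = fderiv ℝ Ham (Dil l (c (t / l^2))) (Pi.single 5 1) := by
        rw [fderiv_dil hl (hQpos _) 5]
        have : sVec l (5 : Fin 6) = (l^2)⁻¹ := rfl
        rw [this]; field_simp
      have hd := (h2.comp t (hdiv t)).const_mul (l^2)
      rw [hval] at hd
      exact hd
    · have hval : l⁻¹ * (-(fderiv ℝ Ham (c (t/l^2)) (Pi.single 0 1)) * (1 / l^2))
          = -(fderiv ℝ Ham (Dil l (c (t / l^2))) (Pi.single 0 1)) := by
        rw [fderiv_dil hl (hQpos _) 0]
        have : sVec l (0 : Fin 6) = l := rfl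
        rw [this]; field_simp
      have hd := (h3.comp t (hdiv t)).const_mul l⁻¹
      rw [hval] at hd
      exact hd
    · have hval : l⁻¹ * (-(fderiv ℝ Ham (c (t/l^2)) (Pi.single 1 1)) * (1 / l^2))
          = -(fderiv ℝ Ham (Dil l (c (t / l^2))) (Pi.single 1 1)) := by
        rw [fderiv_dil hl (hQpos _) 1]
        have : sVec l (1 : Fin 6) = l := rfl
        rw [this]; field_simp
      have hd := (h4.comp t (hdiv t)).const_mul l⁻¹
      rw [hval] at hd
      exact hd
    · have hval : (l^2)⁻¹ * (-(fderiv ℝ Ham (c (t/l^2)) (Pi.single 2 1)) * (1 / l^2))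
          = -(fderiv ℝ Ham (Dil l (c (t / l^2))) (Pi.single 2 1)) := by
        rw [fderiv_dil hl (hQpos _) 2]
        have : sVec l (2 : Fin 6) = l^2 := rfl
        rw [this]; field_simp
      have hd := (h5.comp t (hdiv t)).const_mul (l^2)⁻¹
      rw [hval] at hd
      exact hd
  · intro t
    have : (t + l^2 * T) / l^2 = t / l^2 + T := by field_simp
    rw [this, hper]
  · have hpt : ∀ s : ℝ, (Qf (Dil l (c s))) ^ ((1:ℝ)/4) = l * (Qf (c s)) ^ ((1:ℝ)/4) := by
      intro s
      rw [Qf_dil, Real.mul_rpow (by positivity) (Qf_nonneg _)]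
      congr 1
      rw [← Real.rpow_natCast l 4, ← Real.rpow_mul hl.le]
      norm_num
    have himg : ((fun t => (Qf (Dil l (c (t / l^2)))) ^ ((1:ℝ)/4)) '' Set.Icc 0 (l^2 * T))
        = (fun x => l * x) '' ((fun t => (Qf (c t)) ^ ((1:ℝ)/4)) '' Set.Icc 0 T) := by
      rw [Set.image_image]
      ext y
      simp only [Set.mem_image, Set.mem_Icc]
      constructor
      · rintro ⟨t, ⟨ht0, ht1⟩, rfl⟩
        refine ⟨t / l^2, ⟨by positivity, ?_⟩, (hpt _).symm⟩
        rw [div_le_iff₀ (by positivity)]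
        linarith [mul_comm T (l^2)]
      · rintro ⟨t, ⟨ht0, ht1⟩, rfl⟩
        refine ⟨l^2 * t, ⟨by positivity, mul_le_mul_of_nonneg_left ht1 (by positivity)⟩, ?_⟩
        rw [mul_div_cancel_left₀ _ hl2, hpt]
    have hsmul : (fun x : ℝ => l * x) '' ((fun t => (Qf (c t)) ^ ((1:ℝ)/4)) '' Set.Icc 0 T)
        = l • ((fun t => (Qf (c t)) ^ ((1:ℝ)/4)) '' Set.Icc 0 T) := by
      rw [← Set.image_smul]
      simp [smul_eq_mul]
    rw [himg, hsmul, Real.sSup_smul_of_nonneg hl.le, smul_eq_mul, ← ha]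
  · rw [show (l^2 * T)^2 = l^4 * T^2 by ring, show (l * a)^4 = l^4 * a^4 by ring,
      mul_div_mul_left _ _ (show (l^4 : ℝ) ≠ 0 by positivity)]
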